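/- Let n ≥ 1, m ≥ 2, and work in ZMod n. Let (R_{ij})_{i≠j, i,j∈{1,…,m}} be independent uniform random variables on ZMod n, and for inputs x ∈ (ZMod n)^m define S_i(x) = x_i + Σ_{j≠i} R_{ji} − Σ_{j≠i} R_{ij}. Define the view of party 1 on input x as the tuple View_1(x) = ( (R_{1j})_{j≠1}, (R_{j1})_{j≠1}, (S_1(x),…,S_m(x)) ). Then for any x, x' ∈ (ZMod n)^m with x_1 = x'_1 and Σ_i x_i = Σ_i x'_i, the random tuples View_1(x) and View_1(x') have the same distribution. -/

import Mathlib

open MeasureTheory ProbabilityTheory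

private lemma unif_translate {α : Type*} [Fintype α] [Nonempty α] [MeasurableSpace α]
    [MeasurableSingletonClass α] [AddGroup α] (c : α) :
    MeasurePreserving (fun z : α => z + c) (uniformOn (Set.univ : Set α))
      (uniformOn (Set.univ : Set α)) := by
  refine ⟨measurable_of_countable _, ?_⟩
  refine Measure.ext_of_singleton fun z => ?_
  rw [Measure.map_apply (measurable_of_countable _) (measurableSet_singleton z)]
  have h : (fun w : α => w + c) ⁻¹' {z} = {z - c} := by
    ext w
    simp only [Set.mem_preimage, Set.mem_singleton_iff]
    exact Iff.symm eq_sub_iff_add_eq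
  rw [h, uniformOn_univ, uniformOn_univ, Measure.count_singleton, Measure.count_singleton]

private lemma map_fun_pi {ι : Type*} [Fintype ι] {Ω : Type*} [MeasurableSpace Ω]
    (μ : Measure Ω) {β : Type*} {mβ : MeasurableSpace β} (f : ι → Ω → β)
    (hmeas : ∀ i, Measurable (f i)) (hindep : iIndepFun f μ)
    (νi : Measure β) [SigmaFinite νi] (hu : ∀ i, Measure.map (f i) μ = νi) :
    Measure.map (fun ω i => f i ω) μ = Measure.pi fun _ => νi := by
  have hF : Measurable (fun ω i => f i ω) := measurable_pi_iff.mpr hmeas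
  refine (Measure.pi_eq fun s hs => ?_).symm
  rw [Measure.map_apply hF (MeasurableSet.univ_pi hs)]
  have hpre : (fun ω i => f i ω) ⁻¹' Set.univ.pi s = ⋂ i ∈ Finset.univ, f i ⁻¹' s i := by
    ext ω; simp [Set.mem_pi]
  rw [hpre, hindep.measure_inter_preimage_eq_mul Finset.univ (fun i _ => hs i)]
  refine Finset.prod_congr rfl fun i _ => ?_
  rw [← hu i, Measure.map_apply (hmeas i) (hs i)]

private def shiftc (n m : ℕ) (hm : 2 ≤ m) (x x' : Fin m → ZMod n) :
    {p : Fin m × Fin m // p.1 ≠ p.2} → ZMod n :=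
  fun p => if p.1.1 = (⟨1, by omega⟩ : Fin m) then x p.1.2 - x' p.1.2 else 0

private lemma shiftc_fst (n m : ℕ) (hm : 2 ≤ m) (x x' : Fin m → ZMod n)
    (j : Fin m) (h : (⟨0, by omega⟩ : Fin m) ≠ j) :
    shiftc n m hm x x' ⟨((⟨0, by omega⟩ : Fin m), j), h⟩ = 0 := by
  unfold shiftc
  exact if_neg (by simp [Fin.ext_iff])

private lemma shiftc_snd (n m : ℕ) (hm : 2 ≤ m) (x x' : Fin m → ZMod n)
    (h1 : x ⟨0, by omega⟩ = x' ⟨0, by omega⟩)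
    (j : Fin m) (h : j ≠ (⟨0, by omega⟩ : Fin m)) :
    shiftc n m hm x x' ⟨(j, (⟨0, by omega⟩ : Fin m)), h⟩ = 0 := by
  unfold shiftc
  split <;> simp [h1]

private lemma shift_S (n m : ℕ) (hm : 2 ≤ m) (x x' : Fin m → ZMod n)
    (h1 : x ⟨0, by omega⟩ = x' ⟨0, by omega⟩) (hxx' : ∑ i, x i = ∑ i, x' i)
    (r : {p : Fin m × Fin m // p.1 ≠ p.2} → ZMod n) (i : Fin m) :
    x i + (∑ j ∈ Finset.univ.erase i, (if h : j ≠ i then r ⟨(j, i), h⟩ else 0))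
      - ∑ j ∈ Finset.univ.erase i, (if h : i ≠ j then r ⟨(i, j), h⟩ else 0)
    = x' i + (∑ j ∈ Finset.univ.erase i,
        (if h : j ≠ i then r ⟨(j, i), h⟩ + shiftc n m hm x x' ⟨(j, i), h⟩ else 0))
      - ∑ j ∈ Finset.univ.erase i,
        (if h : i ≠ j then r ⟨(i, j), h⟩ + shiftc n m hm x x' ⟨(i, j), h⟩ else 0) := by
  classical
  set a : Fin m := ⟨1, by omega⟩ with hadef
  have hδsum : ∑ j, (x j - x' j) = 0 := by
    rw [Finset.sum_sub_distrib, hxx', sub_self]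
  have ein : (∑ j ∈ Finset.univ.erase i,
        (if h : j ≠ i then r ⟨(j, i), h⟩ + shiftc n m hm x x' ⟨(j, i), h⟩ else 0)) =
      (∑ j ∈ Finset.univ.erase i, (if h : j ≠ i then r ⟨(j, i), h⟩ else 0)) +
      (∑ j ∈ Finset.univ.erase i, (if j = a then x i - x' i else 0)) := by
    rw [← Finset.sum_add_distrib]
    refine Finset.sum_congr rfl fun j hj => ?_
    have hji : j ≠ i := Finset.ne_of_mem_erase hj
    rw [dif_pos hji, dif_pos hji]
    unfold shiftc
    rfl
  have eout : (∑ j ∈ Finset.univ.erase i,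
        (if h : i ≠ j then r ⟨(i, j), h⟩ + shiftc n m hm x x' ⟨(i, j), h⟩ else 0)) =
      (∑ j ∈ Finset.univ.erase i, (if h : i ≠ j then r ⟨(i, j), h⟩ else 0)) +
      (∑ j ∈ Finset.univ.erase i, (if i = a then x j - x' j else 0)) := by
    rw [← Finset.sum_add_distrib]
    refine Finset.sum_congr rfl fun j hj => ?_
    have hij : i ≠ j := (Finset.ne_of_mem_erase hj).symm
    rw [dif_pos hij, dif_pos hij]
    unfold shiftc
    rfl
  rw [ein, eout]
  by_cases hia : i = a
  · subst hia
    have h2 : (∑ j ∈ Finset.univ.erase a, (if j = a then x a - x' a else 0)) = 0 := by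
      apply Finset.sum_eq_zero
      intro j hj
      exact if_neg (Finset.ne_of_mem_erase hj)
    have h3 : (∑ j ∈ Finset.univ.erase a, (if (a : Fin m) = a then x j - x' j else 0))
        = -(x a - x' a) := by
      have e : ∀ j : Fin m, (if (a : Fin m) = a then x j - x' j else 0) = x j - x' j :=
        fun j => if_pos rfl
      rw [Finset.sum_congr rfl fun j _ => e j,
        Finset.sum_erase_eq_sub (Finset.mem_univ a), hδsum]
      ring
    rw [h2, h3]
    ring
  · have h2 : (∑ j ∈ Finset.univ.erase i, (if j = a then x i - x' i else 0))
        = x i - x' i := by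
      rw [Finset.sum_ite_eq' (Finset.univ.erase i) a (fun _ => x i - x' i)]
      simp [Finset.mem_erase, Ne.symm hia]
    have h3 : (∑ j ∈ Finset.univ.erase i, (if i = a then x j - x' j else 0)) = 0 := by
      simp [hia]
    rw [h2, h3]
    ring

theorem secure_sum_zmod_secrecy (n m : ℕ) (hn : 1 ≤ n) (hm : 2 ≤ m)
    {Ω : Type*} [MeasurableSpace Ω] (μ : Measure Ω) [IsProbabilityMeasure μ]
    (R : {p : Fin m × Fin m // p.1 ≠ p.2} → Ω → ZMod n)
    (hmeas : ∀ p, Measurable (R p))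
    (hindep : iIndepFun R μ)
    (hunif : ∀ p, Measure.map (R p) μ = uniformOn (Set.univ : Set (ZMod n)))
    (S : (Fin m → ZMod n) → Ω → Fin m → ZMod n)
    (hS : ∀ x ω i, S x ω i = x i +
      (∑ j ∈ Finset.univ.erase i, (if h : j ≠ i then R ⟨(j, i), h⟩ ω else 0)) -
      ∑ j ∈ Finset.univ.erase i, (if h : i ≠ j then R ⟨(i, j), h⟩ ω else 0))
    (View₁ : (Fin m → ZMod n) → Ω →
      ({j : Fin m // j ≠ (⟨0, by omega⟩ : Fin m)} → ZMod n) ×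
      ({j : Fin m // j ≠ (⟨0, by omega⟩ : Fin m)} → ZMod n) ×
      (Fin m → ZMod n))
    (hView : ∀ x ω, View₁ x ω =
      (fun j : {j : Fin m // j ≠ (⟨0, by omega⟩ : Fin m)} =>
         R ⟨((⟨0, by omega⟩ : Fin m), j.1), Ne.symm j.2⟩ ω,
       fun j : {j : Fin m // j ≠ (⟨0, by omega⟩ : Fin m)} =>
         R ⟨(j.1, (⟨0, by omega⟩ : Fin m)), j.2⟩ ω,
       S x ω))
    (x x' : Fin m → ZMod n)
    (h1 : x ⟨0, by omega⟩ = x' ⟨0, by omega⟩)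
    (hxx' : ∑ i, x i = ∑ i, x' i) :
    Measure.map (View₁ x) μ = Measure.map (View₁ x') μ := by
  classical
  haveI : NeZero n := ⟨by omega⟩
  haveI : IsProbabilityMeasure (uniformOn (Set.univ : Set (ZMod n))) :=
    uniformOn_isProbabilityMeasure Set.finite_univ Set.univ_nonempty
  -- abbreviations
  let G : (Fin m → ZMod n) → ({p : Fin m × Fin m // p.1 ≠ p.2} → ZMod n) →
      ({j : Fin m // j ≠ (⟨0, by omega⟩ : Fin m)} → ZMod n) ×
      ({j : Fin m // j ≠ (⟨0, by omega⟩ : Fin m)} → ZMod n) ×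
      (Fin m → ZMod n) := fun y r =>
    (fun j => r ⟨((⟨0, by omega⟩ : Fin m), j.1), Ne.symm j.2⟩,
     fun j => r ⟨(j.1, (⟨0, by omega⟩ : Fin m)), j.2⟩,
     fun i => y i +
      (∑ j ∈ Finset.univ.erase i, (if h : j ≠ i then r ⟨(j, i), h⟩ else 0)) -
      ∑ j ∈ Finset.univ.erase i, (if h : i ≠ j then r ⟨(i, j), h⟩ else 0))
  have hRvec : Measurable (fun ω p => R p ω : Ω → {p : Fin m × Fin m // p.1 ≠ p.2} → ZMod n) :=
    measurable_pi_iff.mpr hmeas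
  have hmap : Measure.map (fun ω p => R p ω) μ =
      Measure.pi (fun _ : {p : Fin m × Fin m // p.1 ≠ p.2} =>
        uniformOn (Set.univ : Set (ZMod n))) :=
    map_fun_pi μ R hmeas hindep _ hunif
  have hcomp : ∀ y, View₁ y = fun ω => G y (fun p => R p ω) := by
    intro y; funext ω
    rw [hView]
    exact Prod.ext rfl (Prod.ext rfl (funext fun i => hS y ω i))
  have hmapG : ∀ y, Measure.map (View₁ y) μ =
      Measure.map (G y) (Measure.pi (fun _ : {p : Fin m × Fin m // p.1 ≠ p.2} =>
        uniformOn (Set.univ : Set (ZMod n)))) := by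
    intro y
    have hmm := Measure.map_map (f := fun ω p => R p ω) (g := G y)
      (measurable_of_countable _) hRvec (μ := μ)
    rw [Function.comp_def] at hmm
    rw [hcomp y, ← hmm, hmap]
  have hT : MeasurePreserving (fun r p => r p + shiftc n m hm x x' p)
      (Measure.pi (fun _ : {p : Fin m × Fin m // p.1 ≠ p.2} =>
        uniformOn (Set.univ : Set (ZMod n))))
      (Measure.pi (fun _ : {p : Fin m × Fin m // p.1 ≠ p.2} =>
        uniformOn (Set.univ : Set (ZMod n)))) :=
    measurePreserving_pi _ _ fun p => unif_translate (shiftc n m hm x x' p)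
  have hGT : G x = fun r => G x' (fun p => r p + shiftc n m hm x x' p) := by
    funext r
    refine Prod.ext ?_ (Prod.ext ?_ ?_)
    · funext j
      show r _ = r _ + shiftc n m hm x x' ⟨((⟨0, by omega⟩ : Fin m), j.1), Ne.symm j.2⟩
      rw [shiftc_fst n m hm x x' j.1 (Ne.symm j.2), add_zero]
    · funext j
      show r _ = r _ + shiftc n m hm x x' ⟨(j.1, (⟨0, by omega⟩ : Fin m)), j.2⟩
      rw [shiftc_snd n m hm x x' h1 j.1 j.2, add_zero]
    · funext i
      exact shift_S n m hm x x' h1 hxx' r i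
  rw [hmapG x, hmapG x', hGT]
  have hmm2 := Measure.map_map (g := G x')
    (f := fun r p => r p + shiftc n m hm x x' p)
    (measurable_of_countable _) hT.measurable
    (μ := Measure.pi (fun _ : {p : Fin m × Fin m // p.1 ≠ p.2} =>
        uniformOn (Set.univ : Set (ZMod n))))
  rw [Function.comp_def] at hmm2
  rw [← hmm2, hT.map_eq]
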